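/- For integers d₁, d₂ ≥ 1 let G(d₁,d₂) = ⟨δ₁, δ₂, λ | δ₁ = [δ₂^{d₂}, λ^{−1}], δ₂ = [δ₁^{d₁}, λ], [δ₁^{d₁}, δ₂^{d₂}] = 1⟩. Then there is a group isomorphism G(d₁,d₂) ≅ G(d₂,d₁) sending δ₁ ↦ δ₂′, δ₂ ↦ δ₁′, λ ↦ (λ′)^{−1}, where δ₁′, δ₂′, λ′ are the generators of G(d₂,d₁). In particular, when d₁ = d₂ this gives an automorphism of G(d₁,d₁) of order two (composed with identity checks) swapping δ₁ and δ₂ and inverting λ. -/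

import Mathlib

/-- Relators of the group `⟨δ₁, δ₂, λ | δ₁ = [δ₂^{d₂}, λ⁻¹], δ₂ = [δ₁^{d₁}, λ],
[δ₁^{d₁}, δ₂^{d₂}] = 1⟩`, where `δ₁ = of 0`, `δ₂ = of 1`, `λ = of 2` and
`[a,b] = a·b·a⁻¹·b⁻¹`. -/
def grels (d₁ d₂ : ℕ) : Set (FreeGroup (Fin 3)) :=
  { FreeGroup.of 0 * ((FreeGroup.of 1) ^ d₂ * (FreeGroup.of 2)⁻¹ *
      ((FreeGroup.of 1) ^ d₂)⁻¹ * ((FreeGroup.of 2)⁻¹)⁻¹)⁻¹,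
    FreeGroup.of 1 * ((FreeGroup.of 0) ^ d₁ * FreeGroup.of 2 *
      ((FreeGroup.of 0) ^ d₁)⁻¹ * (FreeGroup.of 2)⁻¹)⁻¹,
    (FreeGroup.of 0) ^ d₁ * (FreeGroup.of 1) ^ d₂ *
      ((FreeGroup.of 0) ^ d₁)⁻¹ * ((FreeGroup.of 1) ^ d₂)⁻¹ }

lemma pg_rel_one {α : Type*} {rels : Set (FreeGroup α)} {r : FreeGroup α} (hr : r ∈ rels) :
    PresentedGroup.mk rels r = 1 :=
  (QuotientGroup.eq_one_iff r).mpr (Subgroup.subset_normalClosure hr)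

lemma grels_lift_one (d₁ d₂ : ℕ) :
    ∀ r ∈ grels d₁ d₂, FreeGroup.lift
      (![PresentedGroup.of 1, PresentedGroup.of 0, (PresentedGroup.of 2)⁻¹] :
        Fin 3 → PresentedGroup (grels d₂ d₁)) r = 1 := by
  set a : PresentedGroup (grels d₂ d₁) := PresentedGroup.of 0 with h0
  set b : PresentedGroup (grels d₂ d₁) := PresentedGroup.of 1 with h1
  set t : PresentedGroup (grels d₂ d₁) := PresentedGroup.of 2 with h2
  have ha : a * (b ^ d₁ * t⁻¹ * (b ^ d₁)⁻¹ * t⁻¹⁻¹)⁻¹ = 1 := by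
    have := pg_rel_one (rels := grels d₂ d₁) (Set.mem_insert _ _)
    simpa only [map_mul, map_inv, map_pow, h0, h1, h2, PresentedGroup.of] using this
  have hb : b * (a ^ d₂ * t * (a ^ d₂)⁻¹ * t⁻¹)⁻¹ = 1 := by
    have := pg_rel_one (rels := grels d₂ d₁)
      (Set.mem_insert_iff.mpr (Or.inr (Set.mem_insert _ _)))
    simpa only [map_mul, map_inv, map_pow, h0, h1, h2, PresentedGroup.of] using this
  have hc : a ^ d₂ * b ^ d₁ * (a ^ d₂)⁻¹ * (b ^ d₁)⁻¹ = 1 := by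
    have := pg_rel_one (rels := grels d₂ d₁)
      (Set.mem_insert_iff.mpr (Or.inr (Set.mem_insert_iff.mpr (Or.inr rfl))))
    simpa only [map_mul, map_inv, map_pow, h0, h1, h2, PresentedGroup.of] using this
  rintro r (rfl | rfl | rfl)
  · simp only [map_mul, map_inv, map_pow, FreeGroup.lift_apply_of]
    simp only [Matrix.cons_val_zero, Matrix.cons_val_one, Matrix.head_cons,
      Matrix.cons_val_two, Matrix.tail_cons]
    have hb' : b = a ^ d₂ * t * (a ^ d₂)⁻¹ * t⁻¹ := by
      rw [mul_inv_eq_one] at hb; exact hb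
    rw [hb']; group
  · simp only [map_mul, map_inv, map_pow, FreeGroup.lift_apply_of]
    simp only [Matrix.cons_val_zero, Matrix.cons_val_one, Matrix.head_cons,
      Matrix.cons_val_two, Matrix.tail_cons]
    have ha' : a = b ^ d₁ * t⁻¹ * (b ^ d₁)⁻¹ * t := by
      rw [mul_inv_eq_one] at ha; simpa using ha
    rw [ha']; group
  · simp only [map_mul, map_inv, map_pow, FreeGroup.lift_apply_of]
    simp only [Matrix.cons_val_zero, Matrix.cons_val_one, Matrix.head_cons,
      Matrix.cons_val_two, Matrix.tail_cons]
    have comm : a ^ d₂ * b ^ d₁ = b ^ d₁ * a ^ d₂ := by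
      rw [mul_inv_eq_one, mul_inv_eq_iff_eq_mul] at hc; simpa using hc
    rw [← comm]; group

/-- The symmetry `G(d₁,d₂) ≅ G(d₂,d₁)`: `δ₁ ↦ δ₂′`, `δ₂ ↦ δ₁′`, `λ ↦ (λ′)⁻¹`. -/
theorem stmt_6 (d₁ d₂ : ℕ) (hd₁ : 1 ≤ d₁) (hd₂ : 1 ≤ d₂) :
    ∃ e : PresentedGroup (grels d₁ d₂) ≃* PresentedGroup (grels d₂ d₁),
      e (PresentedGroup.of (rels := grels d₁ d₂) (0 : Fin 3)) =
        PresentedGroup.of (rels := grels d₂ d₁) (1 : Fin 3) ∧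
      e (PresentedGroup.of (rels := grels d₁ d₂) (1 : Fin 3)) =
        PresentedGroup.of (rels := grels d₂ d₁) (0 : Fin 3) ∧
      e (PresentedGroup.of (rels := grels d₁ d₂) (2 : Fin 3)) =
        (PresentedGroup.of (rels := grels d₂ d₁) (2 : Fin 3))⁻¹ := by
  let φ := PresentedGroup.toGroup (grels_lift_one d₁ d₂)
  let ψ := PresentedGroup.toGroup (grels_lift_one d₂ d₁)
  have hψφ : ψ.comp φ = MonoidHom.id _ := by
    ext x
    fin_cases x <;>
      simp [φ, ψ, PresentedGroup.toGroup.of]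
  have hφψ : φ.comp ψ = MonoidHom.id _ := by
    ext x
    fin_cases x <;>
      simp [φ, ψ, PresentedGroup.toGroup.of]
  refine ⟨MonoidHom.toMulEquiv φ ψ hψφ hφψ, ?_, ?_, ?_⟩ <;>
    simp [MonoidHom.toMulEquiv, φ, PresentedGroup.toGroup.of]
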